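/- Let G be a finite simple connected graph containing vertices u, v, v₁, v₂ such that uv, uv₁, vv₁ ∈ E(G), vv₂ ∈ E(G), uv₂ ∉ E(G), and v₁v₂ ∉ E(G) (configuration F₁ of the paper: a triangle uvv₁ with a pendant neighbor v₂ of v). Then the edge uv is necessary: there is no graph H on the same vertex set with uv ∉ E(H) and T₃(H) = T₃(G). -/

import Mathlib

/-- The set of connected triples of a graph: `3`-subsets of the vertex set
inducing a connected subgraph. -/
def connTriples {V : Type*} (G : SimpleGraph V) : Set (Finset V) :=
  {X | X.card = 3 ∧ (G.induce (X : Set V)).Connected}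

lemma triple_mem_iff {V : Type*} [DecidableEq V] (G : SimpleGraph V) {a b c : V}
    (hab : a ≠ b) (hac : a ≠ c) (hbc : b ≠ c) :
    ({a, b, c} : Finset V) ∈ connTriples G ↔
      (G.Adj a b ∧ G.Adj a c) ∨ (G.Adj a b ∧ G.Adj b c) ∨ (G.Adj a c ∧ G.Adj b c) := by
  have hcard : ({a, b, c} : Finset V).card = 3 := by
    rw [Finset.card_insert_of_notMem (by simp [hab, hac]),
        Finset.card_insert_of_notMem (by simp [hbc]), Finset.card_singleton]
  have hset : ((({a, b, c} : Finset V) : Set V)) = {a, b, c} := by simp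
  have hma : a ∈ ({a, b, c} : Set V) := by simp
  have hmb : b ∈ ({a, b, c} : Set V) := by simp
  have hmc : c ∈ ({a, b, c} : Set V) := by simp
  constructor
  · rintro ⟨-, hconn⟩
    rw [hset] at hconn
    by_contra hcon
    push_neg at hcon
    obtain ⟨hn1, hn2, hn3⟩ := hcon
    -- find an isolated vertex x and another vertex y
    have key : ∀ x y : V, x ∈ ({a, b, c} : Set V) → y ∈ ({a, b, c} : Set V) →
        x ≠ y → (¬ G.Adj x a) → (¬ G.Adj x b) → (¬ G.Adj x c) → False := by
      intro x y hx hy hxy nxa nxb nxc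
      obtain ⟨w⟩ := hconn.preconnected ⟨x, hx⟩ ⟨y, hy⟩
      have hnil : ¬ w.Nil := SimpleGraph.Walk.not_nil_of_ne (by
        intro h; exact hxy (congrArg Subtype.val h))
      have hadj := w.adj_snd hnil
      set z := w.getVert 1 with hzdef
      have hadj' : G.Adj x z.val := hadj
      have hz : z.val ∈ ({a, b, c} : Set V) := z.2
      rcases hz with hz | hz | hz
      · exact nxa (hz ▸ hadj')
      · exact nxb (hz ▸ hadj')
      · exact nxc (hz ▸ hadj')
    by_cases hAB : G.Adj a b
    · have hnac : ¬ G.Adj a c := fun h => hn1 hAB h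
      have hnbc : ¬ G.Adj b c := fun h => hn2 hAB h
      exact key c a hmc hma hac.symm (fun h => hnac h.symm) (fun h => hnbc h.symm)
        (fun h => G.loopless.irrefl c h)
    · by_cases hAC : G.Adj a c
      · have hnbc : ¬ G.Adj b c := fun h => hn3 hAC h
        exact key b a hmb hma hab.symm (fun h => hAB h.symm) (fun h => G.loopless.irrefl b h) hnbc
      · exact key a b hma hmb hab (fun h => G.loopless.irrefl a h) hAB hAC
  · intro h
    refine ⟨hcard, ?_⟩
    rw [hset]
    rw [SimpleGraph.connected_iff]
    -- pick a center vertex m adjacent to the other two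
    obtain ⟨m, hm, hma', hmb', hmc'⟩ :
        ∃ m, m ∈ ({a, b, c} : Set V) ∧
          (a ≠ m → G.Adj m a) ∧ (b ≠ m → G.Adj m b) ∧ (c ≠ m → G.Adj m c) := by
      rcases h with ⟨hab', hac'⟩ | ⟨hab', hbc'⟩ | ⟨hac', hbc'⟩
      · exact ⟨a, hma, fun h => absurd rfl h, fun _ => hab', fun _ => hac'⟩
      · exact ⟨b, hmb, fun _ => hab'.symm, fun h => absurd rfl h, fun _ => hbc'⟩
      · exact ⟨c, hmc, fun _ => hac'.symm, fun _ => hbc'.symm, fun h => absurd rfl h⟩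
    constructor
    · intro x y
      have reach : ∀ z : ({a, b, c} : Set V),
          (G.induce ({a, b, c} : Set V)).Reachable z ⟨m, hm⟩ := by
        rintro ⟨z, hz⟩
        by_cases hzm : z = m
        · exact ⟨SimpleGraph.Walk.nil.copy (by simp [hzm]) rfl⟩
        · have : G.Adj m z := by
            rcases hz with rfl | rfl | rfl
            · exact hma' hzm
            · exact hmb' hzm
            · exact hmc' hzm
          exact (SimpleGraph.Adj.reachable (by exact this.symm :
            (G.induce ({a, b, c} : Set V)).Adj ⟨z, hz⟩ ⟨m, hm⟩))
      exact (reach x).trans (reach y).symm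
    · exact ⟨⟨a, hma⟩⟩

/-- Configuration `F₁`: a triangle `u v v₁` together with a vertex `v₂` adjacent
to `v` but to neither `u` nor `v₁` forces the edge `uv` to be necessary. -/
theorem stmt12 {V : Type*} [Fintype V] (G : SimpleGraph V) (hc : G.Connected)
    (u v v₁ v₂ : V)
    (h1 : G.Adj u v) (h2 : G.Adj u v₁) (h3 : G.Adj v v₁) (h4 : G.Adj v v₂)
    (h5 : ¬ G.Adj u v₂) (h6 : ¬ G.Adj v₁ v₂)
    (h7 : u ≠ v₂) (h8 : v₁ ≠ v₂) :
    ¬ ∃ H : SimpleGraph V, ¬ H.Adj u v ∧ connTriples H = connTriples G := by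
  classical
  rintro ⟨H, hHuv, hT⟩
  have huv : u ≠ v := h1.ne
  have huv1 : u ≠ v₁ := h2.ne
  have hvv1 : v ≠ v₁ := h3.ne
  have hvv2 : v ≠ v₂ := h4.ne
  -- {u, v, v₂} connected in G hence in H
  have t1G : ({u, v, v₂} : Finset V) ∈ connTriples G :=
    (triple_mem_iff G huv h7 hvv2).2 (Or.inr (Or.inl ⟨h1, h4⟩))
  have t1H := (triple_mem_iff H huv h7 hvv2).1 (hT ▸ t1G)
  have hHuv2 : H.Adj u v₂ ∧ H.Adj v v₂ := by
    rcases t1H with ⟨h, _⟩ | ⟨h, _⟩ | h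
    · exact absurd h hHuv
    · exact absurd h hHuv
    · exact h
  -- {u, v, v₁} connected in G hence in H
  have t2G : ({u, v, v₁} : Finset V) ∈ connTriples G :=
    (triple_mem_iff G huv huv1 hvv1).2 (Or.inl ⟨h1, h2⟩)
  have t2H := (triple_mem_iff H huv huv1 hvv1).1 (hT ▸ t2G)
  have hHuv1 : H.Adj u v₁ ∧ H.Adj v v₁ := by
    rcases t2H with ⟨h, _⟩ | ⟨h, _⟩ | h
    · exact absurd h hHuv
    · exact absurd h hHuv
    · exact h
  -- {u, v₁, v₂} connected in H hence in G — contradiction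
  have t3H : ({u, v₁, v₂} : Finset V) ∈ connTriples H :=
    (triple_mem_iff H huv1 h7 h8).2 (Or.inl ⟨hHuv1.1, hHuv2.1⟩)
  have t3G := (triple_mem_iff G huv1 h7 h8).1 (hT ▸ t3H)
  rcases t3G with ⟨_, h⟩ | ⟨_, h⟩ | ⟨h, _⟩
  · exact h5 h
  · exact h6 h
  · exact h5 h
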